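/- For 0 < ν ≤ 2−√3 and L ≥ 4ν, the polynomial q(ν,L) := L⁴ + 2L³(1−4ν+ν²) + 15L²(1−ν)²ν − 2L(1−ν)⁴(1+4ν+ν²) − (1−ν)⁶(1+ν)² is convex in L; moreover q(ν,0) < 0, ∂_L q(ν,0) < 0, and q(ν,(1+ν)²) = 27ν(1−ν)²(1+ν)⁴ > 0 for 0 < ν < 1. -/

import Mathlib

noncomputable def q (v L : ℝ) : ℝ :=
  L^4 + 2*L^3*(1 - 4*v + v^2) + 15*L^2*(1 - v)^2*v
    - 2*L*(1 - v)^4*(1 + 4*v + v^2) - (1 - v)^6*(1 + v)^2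

theorem stmt19 :
    (∀ v : ℝ, 0 < v → v ≤ 2 - Real.sqrt 3 →
      ConvexOn ℝ (Set.Ici (4*v)) (fun L => q v L)) ∧
    (∀ v : ℝ, 0 < v → v < 1 →
      q v 0 < 0 ∧ deriv (fun L => q v L) 0 < 0 ∧
      q v ((1 + v)^2) = 27*v*(1 - v)^2*(1 + v)^4 ∧
      0 < q v ((1 + v)^2)) := by
  constructor
  · intro v hv hv2
    have hs : Convex ℝ (Set.Ici (4*v)) := convex_Ici _
    have hsq : Real.sqrt 3 ^ 2 = 3 := Real.sq_sqrt (by norm_num)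
    have hc : 0 ≤ 1 - 4*v + v^2 := by nlinarith [Real.sqrt_nonneg 3]
    have hsub : Set.Ici (4*v) ⊆ Set.Ici (0:ℝ) := fun x hx =>
      le_trans (by linarith : (0:ℝ) ≤ 4*v) hx
    have h4 : ConvexOn ℝ (Set.Ici (4*v)) (fun L : ℝ => L^4) :=
      (Even.convexOn_pow (by decide)).subset (Set.subset_univ _) hs
    have h3 : ConvexOn ℝ (Set.Ici (4*v))
        (fun L : ℝ => (2*(1 - 4*v + v^2)) • L^3) :=
      ((convexOn_pow 3).subset hsub hs).smul (by nlinarith)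
    have h2 : ConvexOn ℝ (Set.Ici (4*v))
        (fun L : ℝ => (15*(1 - v)^2*v) • L^2) :=
      ((convexOn_pow 2).subset hsub hs).smul (by positivity)
    have hlin : ConvexOn ℝ (Set.Ici (4*v))
        (fun L : ℝ => ((-2*(1 - v)^4*(1 + 4*v + v^2)) •
            (LinearMap.id : ℝ →ₗ[ℝ] ℝ)) L + (-(1 - v)^6*(1 + v)^2)) :=
      (((-2*(1 - v)^4*(1 + 4*v + v^2)) •
        (LinearMap.id : ℝ →ₗ[ℝ] ℝ)).convexOn hs).add_const _
    have h := ((h4.add h3).add h2).add hlin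
    refine h.congr ?_
    intro L _
    simp only [q, Pi.add_apply, smul_eq_mul, LinearMap.smul_apply, LinearMap.id_coe, id_eq]
    ring
  · intro v hv hv1
    have h1 : q v 0 < 0 := by
      have := pow_pos (show (0:ℝ) < 1 - v by linarith) 6
      have := pow_pos (show (0:ℝ) < 1 + v by linarith) 2
      simp only [q]
      nlinarith
    refine ⟨h1, ?_, ?_, ?_⟩
    · have hd : HasDerivAt (fun L : ℝ => q v L)
          (-(2*(1 - v)^4*(1 + 4*v + v^2))) 0 := by
        have h := (((((hasDerivAt_pow 4 (0:ℝ)).add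
            (((hasDerivAt_pow 3 (0:ℝ)).const_mul 2).mul_const (1 - 4*v + v^2))).add
            ((((hasDerivAt_pow 2 (0:ℝ)).const_mul 15).mul_const ((1 - v)^2)).mul_const v)).sub
            ((((hasDerivAt_id (0:ℝ)).const_mul 2).mul_const ((1 - v)^4)).mul_const (1 + 4*v + v^2))).sub_const
            ((1 - v)^6*(1 + v)^2))
        refine h.congr_deriv ?_
        norm_num
      rw [hd.deriv]
      have := pow_pos (show (0:ℝ) < 1 - v by linarith) 4
      nlinarith
    · simp only [q]; ring
    · have : q v ((1 + v)^2) = 27*v*(1 - v)^2*(1 + v)^4 := by simp only [q]; ring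
      rw [this]
      have hA := pow_pos (show (0:ℝ) < 1 - v by linarith) 2
      have hB := pow_pos (show (0:ℝ) < 1 + v by linarith) 4
      nlinarith [mul_pos (mul_pos hv hA) hB]
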